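/- Let f : [0,1] → ℝ be α-Hölder with 0 < α < 1/2, and A ∈ C^2(ℝ). Assume P^0 f = 0 and P^j f → f pointwise. Define the approximation Ã_N(f) := A(P^0 f) + ∑_{j=0}^{N} A'(P^j f)·Q^j f. Then the residual Δ_N := A(P^{N+1}f) − Ã_N(f) satisfies ‖Δ_N‖_{L^∞} ≤ C·∑_{j=0}^{N} 2^{-2jα} ≤ C/(1 − 2^{-2α}), uniformly in N; in particular the residual for A(f) is a uniformly convergent sum of scale-j terms of size O(2^{-2jα}). -/

import Mathlib

open MeasureTheory Filter

noncomputable def dyadicAvg (j : ℕ) (f : ℝ → ℝ) (x : ℝ) : ℝ :=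
  (2:ℝ)^j * ∫ y in Set.Ioc (((⌈(2:ℝ)^j * x⌉ : ℝ) - 1) / (2:ℝ)^j)
      ((⌈(2:ℝ)^j * x⌉ : ℝ) / (2:ℝ)^j), f y

noncomputable def dyadicDiff (j : ℕ) (f : ℝ → ℝ) (x : ℝ) : ℝ :=
  dyadicAvg (j+1) f x - dyadicAvg j f x


/-- Quadratic Taylor remainder bound via MVT. -/
lemma taylor2 (A : ℝ → ℝ) (hA : ContDiff ℝ 2 A) (a b M : ℝ)
    (hM : ∀ y ∈ Set.Icc a b, |iteratedDeriv 2 A y| ≤ M)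
    (x y : ℝ) (hx : x ∈ Set.Icc a b) (hy : y ∈ Set.Icc a b) :
    |A y - A x - deriv A x * (y - x)| ≤ M * (y - x)^2 := by
  have hA2 : ContDiff ℝ ((1:ℕ)+1) A := by exact_mod_cast hA
  have hA1 : Differentiable ℝ A := hA.differentiable (by norm_num)
  have hA' : Differentiable ℝ (deriv A) :=
    (contDiff_succ_iff_deriv.mp hA2).2.2.differentiable (by norm_num)
  have hM' : ∀ t ∈ Set.Icc a b, |deriv (deriv A) t| ≤ M := by
    intro t ht
    have := hM t ht
    rwa [iteratedDeriv_succ, iteratedDeriv_one] at this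
  set g : ℝ → ℝ := fun t => A y - A t - deriv A t * (y - t) with hg
  have hgd : ∀ t, HasDerivAt g (-(deriv (deriv A) t * (y - t))) t := by
    intro t
    have h1 : HasDerivAt A (deriv A t) t := (hA1 t).hasDerivAt
    have h2 : HasDerivAt (deriv A) (deriv (deriv A) t) t := (hA' t).hasDerivAt
    have h3 : HasDerivAt (fun t : ℝ => y - t) (-1) t := by
      simpa using (hasDerivAt_id t).const_sub y
    have h4 := h2.mul h3
    have h5 := ((hasDerivAt_const t (A y)).sub h1).sub h4
    refine h5.congr_deriv ?_
    ring
  set s := Set.Icc (min x y) (max x y) with hs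
  have hsub : s ⊆ Set.Icc a b := by
    apply Set.Icc_subset_Icc
    · exact le_min hx.1 hy.1
    · exact max_le hx.2 hy.2
  have bound : ∀ t ∈ s, ‖-(deriv (deriv A) t * (y - t))‖ ≤ M * |y - x| := by
    intro t ht
    have hMt := hM' t (hsub ht)
    have hM0 : 0 ≤ M := le_trans (abs_nonneg _) hMt
    have hyt : |y - t| ≤ |y - x| := by
      have h1 : y - t ≤ max x y - min x y := sub_le_sub (le_max_right x y) ht.1
      have h2 : -(y - t) ≤ max x y - min x y := by
        have := sub_le_sub (le_max_left x y) (min_le_right x y)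
        have h3 : t - y ≤ max x y - min x y := sub_le_sub ht.2 (min_le_right x y)
        linarith
      have := abs_le.mpr ⟨by linarith, h1⟩
      rw [max_sub_min_eq_abs, abs_sub_comm] at this
      rwa [abs_sub_comm] at this
    rw [norm_neg, Real.norm_eq_abs, abs_mul]
    exact mul_le_mul hMt hyt (abs_nonneg _) hM0
  have key := Convex.norm_image_sub_le_of_norm_hasDerivWithin_le
    (f := g) (f' := fun t => -(deriv (deriv A) t * (y - t)))
    (fun t _ => (hgd t).hasDerivWithinAt) bound (convex_Icc _ _)
    (Set.mem_Icc.mpr ⟨min_le_right x y, le_max_right x y⟩)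
    (Set.mem_Icc.mpr ⟨min_le_left x y, le_max_left x y⟩)
  have hgy : g y = 0 := by simp [hg]
  have hgx : g x = A y - A x - deriv A x * (y - x) := rfl
  rw [hgy, hgx, sub_zero, Real.norm_eq_abs, Real.norm_eq_abs] at key
  calc |A y - A x - deriv A x * (y - x)| ≤ M * |y - x| * |x - y| := key
    _ = M * (y - x)^2 := by rw [abs_sub_comm x y, mul_assoc, ← abs_mul, ← sq, abs_sq]

lemma avg_close (f : ℝ → ℝ) (Cf α : ℝ) (hα : 0 < α) (hCf : 0 < Cf)
    (hf : ∀ x ∈ Set.Icc (0:ℝ) 1, ∀ y ∈ Set.Icc (0:ℝ) 1,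
      |f x - f y| ≤ Cf * |x - y| ^ α)
    (hmeas : Measurable f) (j : ℕ) (x : ℝ) (hx : x ∈ Set.Ioc (0:ℝ) 1) :
    |dyadicAvg j f x - f x| ≤ Cf * (2:ℝ) ^ (-(j:ℝ) * α) := by
  have h2j : (0:ℝ) < 2^j := by positivity
  set n : ℤ := ⌈(2:ℝ)^j * x⌉ with hn
  set lo : ℝ := ((n:ℝ) - 1) / 2^j with hlo
  set hi : ℝ := (n:ℝ) / 2^j with hhi
  have hn1 : (1:ℤ) ≤ n := Int.ceil_pos.mpr (mul_pos h2j hx.1)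
  have hn2 : (n:ℝ) ≤ 2^j := by
    have : n ≤ (2:ℤ)^j := Int.ceil_le.mpr (by push_cast; nlinarith [hx.2])
    exact_mod_cast this
  have hlo0 : 0 ≤ lo := by
    apply div_nonneg _ h2j.le
    have : (1:ℝ) ≤ (n:ℝ) := by exact_mod_cast hn1
    linarith
  have hhi1 : hi ≤ 1 := by
    rw [hhi, div_le_one h2j]; exact hn2
  have hlohi : lo < hi := by
    rw [hlo, hhi, div_lt_div_iff₀ h2j h2j]; nlinarith
  have hIsub : Set.Ioc lo hi ⊆ Set.Icc (0:ℝ) 1 := fun y hy =>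
    ⟨le_trans hlo0 hy.1.le, le_trans hy.2 hhi1⟩
  have hxI : x ∈ Set.Ioc lo hi := by
    constructor
    · rw [hlo, div_lt_iff₀ h2j]
      have := Int.ceil_lt_add_one ((2:ℝ)^j * x)
      push_cast at this ⊢
      linarith
    · rw [hhi, le_div_iff₀ h2j]
      have := Int.le_ceil ((2:ℝ)^j * x)
      push_cast at this ⊢
      linarith
  have hlen : hi - lo = ((2:ℝ)^j)⁻¹ := by
    rw [hhi, hlo]; field_simp; ring
  have hvol : volume (Set.Ioc lo hi) = ENNReal.ofReal ((2:ℝ)^j)⁻¹ := by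
    rw [Real.volume_Ioc, hlen]
  have hvolfin : volume (Set.Ioc lo hi) < ⊤ := by rw [hvol]; exact ENNReal.ofReal_lt_top
  have hvolR : (volume (Set.Ioc lo hi)).toReal = ((2:ℝ)^j)⁻¹ := by
    rw [hvol, ENNReal.toReal_ofReal (by positivity)]
  -- pointwise bound on the interval
  have hxmem : x ∈ Set.Icc (0:ℝ) 1 := ⟨hx.1.le, hx.2⟩
  have hpt : ∀ y ∈ Set.Ioc lo hi, |f y - f x| ≤ Cf * ((2:ℝ)^j)⁻¹ ^ α := by
    intro y hy
    have hyx : |y - x| ≤ ((2:ℝ)^j)⁻¹ := by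
      rw [← hlen]
      rw [abs_le]
      constructor <;> [nlinarith [hy.1, hxI.2]; nlinarith [hy.2, hxI.1]]
    calc |f y - f x| ≤ Cf * |y - x| ^ α := hf y (hIsub hy) x hxmem
      _ ≤ Cf * ((2:ℝ)^j)⁻¹ ^ α := by
          apply mul_le_mul_of_nonneg_left _ hCf.le
          exact Real.rpow_le_rpow (abs_nonneg _) hyx hα.le
  -- integrability
  have hint : IntegrableOn f (Set.Ioc lo hi) := by
    apply Measure.integrableOn_of_bounded (M := |f x| + Cf * ((2:ℝ)^j)⁻¹ ^ α) hvolfin.ne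
      hmeas.aestronglyMeasurable
    rw [ae_restrict_iff' measurableSet_Ioc]
    apply ae_of_all
    intro y hy
    have := hpt y hy
    rw [Real.norm_eq_abs]
    have := abs_sub_abs_le_abs_sub (f y) (f x)
    linarith [hpt y hy]
  have hintc : IntegrableOn (fun _ : ℝ => f x) (Set.Ioc lo hi) :=
    (integrableOn_const_iff).mpr (Or.inr hvolfin)
  -- expression of the difference
  have hdiff : dyadicAvg j f x - f x = 2^j * ∫ y in Set.Ioc lo hi, (f y - f x) := by
    rw [integral_sub hint hintc, setIntegral_const, measureReal_def, hvolR, smul_eq_mul]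
    rw [dyadicAvg]
    rw [mul_sub]
    rw [← hn, ← hlo, ← hhi]
    field_simp
  rw [hdiff, abs_mul, abs_of_pos h2j]
  have hbd : |∫ y in Set.Ioc lo hi, (f y - f x)| ≤ (Cf * ((2:ℝ)^j)⁻¹ ^ α) * ((2:ℝ)^j)⁻¹ := by
    have := norm_setIntegral_le_of_norm_le_const_ae' (μ := volume) (s := Set.Ioc lo hi)
      (f := fun y => f y - f x) hvolfin
      (ae_of_all _ (fun y hy => by rw [Real.norm_eq_abs]; exact hpt y hy))
    rwa [Real.norm_eq_abs, measureReal_def, hvolR] at this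
  have heq : (2:ℝ)^j * ((Cf * ((2:ℝ)^j)⁻¹ ^ α) * ((2:ℝ)^j)⁻¹) = Cf * (2:ℝ) ^ (-(j:ℝ) * α) := by
    have h1 : ((2:ℝ)^j)⁻¹ ^ α = (2:ℝ) ^ (-(j:ℝ) * α) := by
      rw [← Real.rpow_natCast 2 j, ← Real.rpow_neg (by norm_num)]
      exact (Real.rpow_mul (by norm_num) _ _).symm
    rw [h1]; field_simp
  calc (2:ℝ)^j * |∫ y in Set.Ioc lo hi, (f y - f x)|
      ≤ (2:ℝ)^j * ((Cf * ((2:ℝ)^j)⁻¹ ^ α) * ((2:ℝ)^j)⁻¹) :=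
        mul_le_mul_of_nonneg_left hbd h2j.le
    _ = Cf * (2:ℝ) ^ (-(j:ℝ) * α) := heq

/-- Uniform bound on the residual of the one-dimensional paraproduct
approximation `Ã_N(f) = A(P⁰f) + ∑_{j≤N} A'(Pʲf)·Qʲf` of `A(P^{N+1}f)`. -/
theorem paraproduct_residual_bound (f A : ℝ → ℝ) (α Cf a b M : ℝ)
    (hα : 0 < α) (hα' : α < 1/2) (hCf : 0 < Cf)
    (hf : ∀ x ∈ Set.Icc (0:ℝ) 1, ∀ y ∈ Set.Icc (0:ℝ) 1,
      |f x - f y| ≤ Cf * |x - y| ^ α)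
    (hmeas : Measurable f)
    (hzero : ∀ x ∈ Set.Ioc (0:ℝ) 1, dyadicAvg 0 f x = 0)
    (hconv : ∀ x ∈ Set.Ioc (0:ℝ) 1,
      Tendsto (fun j : ℕ => dyadicAvg j f x) atTop (nhds (f x)))
    (hA : ContDiff ℝ 2 A)
    (hrange : ∀ j : ℕ, ∀ x ∈ Set.Ioc (0:ℝ) 1, dyadicAvg j f x ∈ Set.Icc a b)
    (hM : ∀ y ∈ Set.Icc a b, |iteratedDeriv 2 A y| ≤ M) :
    ∃ C > 0, ∀ N : ℕ, ∀ x ∈ Set.Ioc (0:ℝ) 1,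
      |A (dyadicAvg (N+1) f x) -
          (A (dyadicAvg 0 f x) +
            ∑ j ∈ Finset.range (N+1), deriv A (dyadicAvg j f x) * dyadicDiff j f x)|
        ≤ C * ∑ j ∈ Finset.range (N+1), (2:ℝ) ^ (-(2:ℝ) * (j:ℝ) * α) ∧
      C * ∑ j ∈ Finset.range (N+1), (2:ℝ) ^ (-(2:ℝ) * (j:ℝ) * α)
        ≤ C / (1 - (2:ℝ) ^ (-(2:ℝ) * α)) := by
  have h1mem : (1:ℝ) ∈ Set.Ioc (0:ℝ) 1 := by norm_num
  have hM0 : 0 ≤ M := le_trans (abs_nonneg _) (hM _ (hrange 0 1 h1mem))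
  set r : ℝ := (2:ℝ) ^ (-(2:ℝ) * α) with hr
  have hr0 : 0 < r := Real.rpow_pos_of_pos two_pos _
  have hr1 : r < 1 := Real.rpow_lt_one_of_one_lt_of_neg one_lt_two (by nlinarith)
  have hterm_eq : ∀ j : ℕ, (2:ℝ) ^ (-(2:ℝ) * (j:ℝ) * α) = r ^ j := by
    intro j
    rw [hr, ← Real.rpow_natCast ((2:ℝ) ^ (-(2:ℝ) * α)) j,
      ← Real.rpow_mul (by norm_num : (0:ℝ) ≤ 2)]
    congr 1; ring
  have hCpos : (0:ℝ) < 4*M*Cf^2 + 1 := by positivity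
  refine ⟨4*M*Cf^2 + 1, hCpos, ?_⟩
  intro N x hx
  have hSnn : 0 ≤ ∑ j ∈ Finset.range (N+1), (2:ℝ) ^ (-(2:ℝ) * (j:ℝ) * α) :=
    Finset.sum_nonneg fun j _ => (Real.rpow_pos_of_pos two_pos _).le
  constructor
  · -- per-scale bound
    have key : ∀ j : ℕ,
        |A (dyadicAvg (j+1) f x) - A (dyadicAvg j f x)
          - deriv A (dyadicAvg j f x) * dyadicDiff j f x|
        ≤ (4*M*Cf^2) * (2:ℝ) ^ (-(2:ℝ) * (j:ℝ) * α) := by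
      intro j
      have hDD : dyadicDiff j f x = dyadicAvg (j+1) f x - dyadicAvg j f x := rfl
      have hQ : |dyadicDiff j f x| ≤ 2 * Cf * (2:ℝ) ^ (-(j:ℝ) * α) := by
        have h1 := avg_close f Cf α hα hCf hf hmeas (j+1) x hx
        have h2 := avg_close f Cf α hα hCf hf hmeas j x hx
        have hmono : (2:ℝ) ^ (-((j:ℝ)+1) * α) ≤ (2:ℝ) ^ (-(j:ℝ) * α) :=
          Real.rpow_le_rpow_of_exponent_le one_le_two (by nlinarith)
        have habs : |dyadicAvg (j+1) f x - dyadicAvg j f x|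
            ≤ |dyadicAvg (j+1) f x - f x| + |dyadicAvg j f x - f x| := by
          have h3 := abs_sub_le (dyadicAvg (j+1) f x) (f x) (dyadicAvg j f x)
          rwa [abs_sub_comm (f x)] at h3
        rw [hDD]
        push_cast at h1
        have h4 := mul_le_mul_of_nonneg_left hmono hCf.le
        linarith
      have ht := taylor2 A hA a b M hM (dyadicAvg j f x) (dyadicAvg (j+1) f x)
        (hrange j x hx) (hrange (j+1) x hx)
      rw [← hDD] at ht
      have hsq : (dyadicDiff j f x)^2 ≤ (2 * Cf * (2:ℝ) ^ (-(j:ℝ) * α))^2 := by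
        rw [← sq_abs]
        exact pow_le_pow_left₀ (abs_nonneg _) hQ 2
      have hBsq : ((2:ℝ) ^ (-(j:ℝ) * α))^2 = (2:ℝ) ^ (-(2:ℝ) * (j:ℝ) * α) := by
        rw [← Real.rpow_natCast ((2:ℝ) ^ (-(j:ℝ) * α)) 2,
          ← Real.rpow_mul (by norm_num : (0:ℝ) ≤ 2)]
        congr 1; push_cast; ring
      calc |A (dyadicAvg (j+1) f x) - A (dyadicAvg j f x)
            - deriv A (dyadicAvg j f x) * dyadicDiff j f x|
          ≤ M * (dyadicDiff j f x)^2 := ht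
        _ ≤ M * (2 * Cf * (2:ℝ) ^ (-(j:ℝ) * α))^2 := mul_le_mul_of_nonneg_left hsq hM0
        _ = (4*M*Cf^2) * (2:ℝ) ^ (-(2:ℝ) * (j:ℝ) * α) := by
            rw [mul_pow, mul_pow, hBsq]; ring
    have tel : A (dyadicAvg (N+1) f x) -
        (A (dyadicAvg 0 f x) +
          ∑ j ∈ Finset.range (N+1), deriv A (dyadicAvg j f x) * dyadicDiff j f x)
        = ∑ j ∈ Finset.range (N+1), (A (dyadicAvg (j+1) f x) - A (dyadicAvg j f x)
            - deriv A (dyadicAvg j f x) * dyadicDiff j f x) := by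
      rw [Finset.sum_sub_distrib, Finset.sum_range_sub (fun j => A (dyadicAvg j f x))]
      ring
    rw [tel]
    calc |∑ j ∈ Finset.range (N+1), (A (dyadicAvg (j+1) f x) - A (dyadicAvg j f x)
            - deriv A (dyadicAvg j f x) * dyadicDiff j f x)|
        ≤ ∑ j ∈ Finset.range (N+1), |A (dyadicAvg (j+1) f x) - A (dyadicAvg j f x)
            - deriv A (dyadicAvg j f x) * dyadicDiff j f x| :=
          Finset.abs_sum_le_sum_abs _ _
      _ ≤ ∑ j ∈ Finset.range (N+1), (4*M*Cf^2) * (2:ℝ) ^ (-(2:ℝ) * (j:ℝ) * α) :=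
          Finset.sum_le_sum fun j _ => key j
      _ = (4*M*Cf^2) * ∑ j ∈ Finset.range (N+1), (2:ℝ) ^ (-(2:ℝ) * (j:ℝ) * α) :=
          (Finset.mul_sum _ _ _).symm
      _ ≤ (4*M*Cf^2 + 1) * ∑ j ∈ Finset.range (N+1), (2:ℝ) ^ (-(2:ℝ) * (j:ℝ) * α) :=
          mul_le_mul_of_nonneg_right (by linarith) hSnn
  · -- geometric series bound
    have hS : ∑ j ∈ Finset.range (N+1), (2:ℝ) ^ (-(2:ℝ) * (j:ℝ) * α) ≤ (1 - r)⁻¹ := by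
      calc ∑ j ∈ Finset.range (N+1), (2:ℝ) ^ (-(2:ℝ) * (j:ℝ) * α)
          = ∑ j ∈ Finset.range (N+1), r ^ j :=
            Finset.sum_congr rfl fun j _ => hterm_eq j
        _ ≤ ∑' n : ℕ, r ^ n :=
            Summable.sum_le_tsum _ (fun i _ => pow_nonneg hr0.le i)
              (summable_geometric_of_lt_one hr0.le hr1)
        _ = (1 - r)⁻¹ := tsum_geometric_of_lt_one hr0.le hr1
    calc (4*M*Cf^2 + 1) * ∑ j ∈ Finset.range (N+1), (2:ℝ) ^ (-(2:ℝ) * (j:ℝ) * α)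
        ≤ (4*M*Cf^2 + 1) * (1 - r)⁻¹ := mul_le_mul_of_nonneg_left hS hCpos.le
      _ = (4*M*Cf^2 + 1) / (1 - r) := (div_eq_mul_inv _ _).symm
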